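/- If f is a 2π-periodic continuously differentiable function whose derivative has concave modulus of continuity ≤ ω, then the conjugate function f̃ exists, is continuously differentiable, and (f̃)' = (f')̃, i.e., conjugation commutes with differentiation on W^r H_ω for r ≥ 1. -/

import Mathlib

open MeasureTheory Real Filter Set
noncomputable section

/-- ω is a concave modulus of continuity. -/
def IsConcaveModulus (ω : ℝ → ℝ) : Prop :=
  Continuous ω ∧ MonotoneOn ω (Ici 0) ∧ ω 0 = 0 ∧
    (∀ s t : ℝ, 0 ≤ s → 0 ≤ t → ω (s + t) ≤ ω s + ω t) ∧
    (∀ t : ℝ, 0 ≤ t → 0 ≤ ω t) ∧ ConcaveOn ℝ (Ici 0) ω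

/-- The Dini condition: ∫₀^ε ω(t)/t dt < ∞ for some ε > 0. -/
def DiniCondition (ω : ℝ → ℝ) : Prop :=
  ∃ ε > 0, IntegrableOn (fun t => ω t / t) (Ioo 0 ε)

/-- f is 2π-periodic with modulus of continuity bounded by ω. -/
def MemH (ω f : ℝ → ℝ) : Prop :=
  Function.Periodic f (2 * π) ∧ ∀ x y : ℝ, |f x - f y| ≤ ω |x - y|

/-- The principal value integral defining the conjugate function converges to L at x. -/
def ConjAt (f : ℝ → ℝ) (x L : ℝ) : Prop :=
  Tendsto (fun δ : ℝ =>
      -(1 / π) * ∫ t in {t : ℝ | δ ≤ |t - x| ∧ |t - x| ≤ π},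
        f t / (2 * Real.tan ((t - x) / 2)))
    (nhdsWithin 0 (Ioi 0)) (nhds L)

/-- g is the trigonometric conjugate of f. -/
def ConjFn (f g : ℝ → ℝ) : Prop := ∀ x : ℝ, ConjAt f x (g x)

/-- f belongs to W^r H_ω. -/
def MemWrH (r : ℕ) (ω f : ℝ → ℝ) : Prop :=
  Function.Periodic f (2 * π) ∧ ContDiff ℝ r f ∧
    ∀ x y : ℝ, |iteratedDeriv r f x - iteratedDeriv r f y| ≤ ω |x - y|

/-- The conjugate kernel. -/
def Kk : ℝ → ℝ := fun u => 1 / (2 * Real.tan (u / 2))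

lemma Kk_neg (u : ℝ) : Kk (-u) = -Kk u := by
  simp [Kk, neg_div, Real.tan_neg, mul_neg, div_neg]

lemma Kk_abs_le_pos {u : ℝ} (h0 : 0 < u) (hπ : u ≤ π) : |Kk u| ≤ 1 / u := by
  rcases eq_or_lt_of_le hπ with rfl | hlt
  · simp [Kk, Real.tan_pi_div_two]
    positivity
  · have h1 : u / 2 < π / 2 := by linarith
    have h2 : u / 2 < Real.tan (u / 2) := Real.lt_tan (by linarith) h1
    have h3 : 0 < 2 * Real.tan (u / 2) := by linarith
    have h4 : u ≤ 2 * Real.tan (u / 2) := by linarith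
    have : Kk u = 1 / (2 * Real.tan (u / 2)) := rfl
    rw [this, abs_of_pos (by positivity)]
    exact one_div_le_one_div_of_le h0 h4

lemma Kk_abs_le {u : ℝ} (h0 : 0 < |u|) (hπ : |u| ≤ π) : |Kk u| ≤ 1 / |u| := by
  rcases lt_trichotomy u 0 with hu | rfl | hu
  · have : |Kk u| = |Kk (-u)| := by rw [Kk_neg, abs_neg]
    rw [this]
    rw [abs_of_neg hu] at hπ ⊢
    exact Kk_abs_le_pos (by linarith) hπ
  · simp at h0
  · rw [abs_of_pos hu] at hπ ⊢
    exact Kk_abs_le_pos hu hπ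

lemma Kk_measurable : Measurable Kk := by
  have ht : Measurable Real.tan := by
    have : Real.tan = fun x => Real.sin x / Real.cos x := funext fun x => Real.tan_eq_sin_div_cos x
    rw [this]
    exact Real.continuous_sin.measurable.div Real.continuous_cos.measurable
  exact measurable_const.div ((measurable_const.mul (ht.comp (measurable_id.div_const 2))))

/-- The punctured ball. -/
def Sball : Set ℝ := {u : ℝ | 0 < |u| ∧ |u| ≤ π}

lemma Sball_meas : MeasurableSet Sball := by
  have : Sball = (fun u : ℝ => |u|) ⁻¹' Ioc 0 π := by
    ext u; simp [Sball]
  rw [this]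
  exact (continuous_abs.measurable) measurableSet_Ioc

lemma Sball_subset : Sball ⊆ Icc (-π) π := by
  intro u hu
  have := hu.2
  rw [abs_le] at this
  exact this

lemma Sball_vol : volume Sball < ⊤ :=
  lt_of_le_of_lt (measure_mono Sball_subset) (by simp [Real.volume_Icc])

/-- annulus -/
def Ann (δ : ℝ) : Set ℝ := {u : ℝ | δ ≤ |u| ∧ |u| ≤ π}

lemma Ann_meas (δ : ℝ) : MeasurableSet (Ann δ) := by
  have : Ann δ = (fun u : ℝ => |u|) ⁻¹' Icc δ π := by
    ext u; simp [Ann]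
  rw [this]
  exact (continuous_abs.measurable) measurableSet_Icc

lemma Ann_subset_Sball {δ : ℝ} (hδ : 0 < δ) : Ann δ ⊆ Sball :=
  fun u hu => ⟨lt_of_lt_of_le hδ hu.1, hu.2⟩

lemma Ann_vol (δ : ℝ) : volume (Ann δ) < ⊤ := by
  refine lt_of_le_of_lt (measure_mono ?_) (by simp [Real.volume_Icc] : volume (Icc (-π) π) < ⊤)
  intro u hu
  have := hu.2
  rw [abs_le] at this
  exact this

lemma Kk_integrableOn_Ann {δ : ℝ} (hδ : 0 < δ) : IntegrableOn Kk (Ann δ) := by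
  have hc : IntegrableOn (fun _ : ℝ => 1/δ) (Ann δ) volume :=
    integrableOn_const (Ann_vol δ).ne
  refine Integrable.mono' hc (Kk_measurable.aestronglyMeasurable.restrict) ?_
  filter_upwards [ae_restrict_mem (Ann_meas δ)] with u hu
  rw [Real.norm_eq_abs]
  calc |Kk u| ≤ 1 / |u| := Kk_abs_le (lt_of_lt_of_le hδ hu.1) hu.2
    _ ≤ 1 / δ := one_div_le_one_div_of_le hδ hu.1

lemma integral_Kk_Ann (δ : ℝ) : ∫ u in Ann δ, Kk u = 0 := by
  have hind : ∀ u : ℝ, (Ann δ).indicator Kk (-u) = - (Ann δ).indicator Kk u := by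
    intro u
    have hmem : -u ∈ Ann δ ↔ u ∈ Ann δ := by simp [Ann]
    by_cases hu : u ∈ Ann δ
    · rw [Set.indicator_of_mem (hmem.2 hu), Set.indicator_of_mem hu, Kk_neg]
    · rw [Set.indicator_of_notMem (fun h => hu (hmem.1 h)), Set.indicator_of_notMem hu, neg_zero]
  have h1 : ∫ u, (Ann δ).indicator Kk u = ∫ u, (Ann δ).indicator Kk (-u) :=
    (integral_neg_eq_self ((Ann δ).indicator Kk) volume).symm
  have h2 : ∫ u, (Ann δ).indicator Kk (-u) = - ∫ u, (Ann δ).indicator Kk u := by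
    simp_rw [hind]; exact integral_neg _
  rw [← integral_indicator (Ann_meas δ)]
  linarith [h1.trans h2]

lemma shift_integral (φ : ℝ → ℝ) (x δ : ℝ) :
    ∫ t in {t : ℝ | δ ≤ |t - x| ∧ |t - x| ≤ π}, φ t * Kk (t - x)
      = ∫ u in Ann δ, φ (x + u) * Kk u := by
  have hT : MeasurableSet {t : ℝ | δ ≤ |t - x| ∧ |t - x| ≤ π} := by
    have : {t : ℝ | δ ≤ |t - x| ∧ |t - x| ≤ π} = (fun t : ℝ => |t - x|) ⁻¹' Icc δ π := by
      ext t; simp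
    rw [this]
    exact ((continuous_abs.comp (continuous_id.sub continuous_const)).measurable) measurableSet_Icc
  rw [← integral_indicator hT, ← integral_indicator (Ann_meas δ),
    ← integral_add_left_eq_self (fun t => ({t : ℝ | δ ≤ |t - x| ∧ |t - x| ≤ π}).indicator
      (fun t => φ t * Kk (t - x)) t) x]
  congr 1
  funext u
  by_cases hu : u ∈ Ann δ
  · rw [Set.indicator_of_mem hu]
    rw [Set.indicator_of_mem (by simpa [Ann] using hu)]
    simp
  · rw [Set.indicator_of_notMem hu]
    rw [Set.indicator_of_notMem (by simpa [Ann] using hu)]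

lemma tendsto_Ann_integral {G : ℝ → ℝ} (hG : IntegrableOn G Sball) :
    Tendsto (fun δ => ∫ u in Ann δ, G u) (nhdsWithin 0 (Ioi 0)) (nhds (∫ u in Sball, G u)) := by
  have hGind : Integrable (Sball.indicator G) := (integrable_indicator_iff Sball_meas).2 hG
  have hsub : ∀ δ : ℝ, Sball \ Ann δ ⊆ Ioo (-δ) δ := by
    intro δ u hu
    rcases hu with ⟨⟨hu0, huπ⟩, hnot⟩
    have : ¬ δ ≤ |u| := fun h => hnot ⟨h, huπ⟩
    exact abs_lt.1 (not_le.1 this)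
  have hmeas : Tendsto (fun δ => volume (Sball \ Ann δ)) (nhdsWithin 0 (Ioi 0)) (nhds 0) := by
    have hb : Tendsto (fun δ : ℝ => volume (Ioo (-δ) δ)) (nhdsWithin 0 (Ioi 0)) (nhds 0) := by
      have h1 : Tendsto (fun δ : ℝ => δ - -δ) (nhdsWithin 0 (Ioi 0)) (nhds 0) := by
        have : Tendsto (fun δ : ℝ => δ - -δ) (nhds 0) (nhds (0 - -0)) :=
          (continuous_id.sub continuous_id.neg).tendsto 0
        simpa using this.mono_left nhdsWithin_le_nhds
      have := ENNReal.tendsto_ofReal h1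
      simpa [Real.volume_Ioo] using this
    exact tendsto_of_tendsto_of_tendsto_of_le_of_le tendsto_const_nhds hb
      (fun δ => zero_le) (fun δ => measure_mono (hsub δ))
  have key : Tendsto (fun δ => ∫ u in Sball \ Ann δ, G u) (nhdsWithin 0 (Ioi 0)) (nhds 0) := by
    have := hGind.tendsto_setIntegral_nhds_zero (l := nhdsWithin 0 (Ioi 0))
      (s := fun δ => Sball \ Ann δ) hmeas
    refine this.congr fun δ => ?_
    rw [setIntegral_indicator Sball_meas, Set.inter_eq_left.2 Set.diff_subset]
  have heq : ∀ᶠ δ in nhdsWithin 0 (Ioi 0), (∫ u in Sball, G u) - ∫ u in Sball \ Ann δ, G u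
      = ∫ u in Ann δ, G u := by
    filter_upwards [self_mem_nhdsWithin] with δ hδ
    have := integral_diff (Ann_meas δ) hG (Ann_subset_Sball hδ)
    linarith [this]
  have := (tendsto_const_nhds (α := ℝ) (x := ∫ u in Sball, G u)).sub key
  rw [sub_zero] at this
  exact this.congr' heq

lemma conjAt_of (φ : ℝ → ℝ) (x : ℝ)
    (hGint : IntegrableOn (fun u => (φ (x + u) - φ x) * Kk u) Sball) :
    ConjAt φ x (-(1 / π) * ∫ u in Sball, (φ (x + u) - φ x) * Kk u) := by
  unfold ConjAt
  have main : Tendsto (fun δ => -(1/π) * ∫ u in Ann δ, (φ (x + u) - φ x) * Kk u)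
      (nhdsWithin 0 (Ioi 0)) (nhds (-(1/π) * ∫ u in Sball, (φ (x + u) - φ x) * Kk u)) :=
    (tendsto_Ann_integral hGint).const_mul _
  refine main.congr' ?_
  filter_upwards [self_mem_nhdsWithin] with δ (hδ : (0:ℝ) < δ)
  have hstep1 : (fun t => φ t / (2 * Real.tan ((t - x) / 2))) = fun t => φ t * Kk (t - x) :=
    funext fun t => div_eq_mul_one_div _ _
  have hsplit : ∫ u in Ann δ, φ (x + u) * Kk u
      = ∫ u in Ann δ, (φ (x + u) - φ x) * Kk u := by
    have e : ∀ u : ℝ, φ (x + u) * Kk u = (φ (x + u) - φ x) * Kk u + φ x * Kk u := by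
      intro u; ring
    simp_rw [e]
    rw [integral_add (hGint.mono_set (Ann_subset_Sball hδ))
      ((Kk_integrableOn_Ann hδ).const_mul (φ x))]
    rw [integral_const_mul, integral_Kk_Ann, mul_zero, add_zero]
  rw [hstep1, shift_integral, hsplit]

/-- The dominating bound. -/
def Bnd (ω : ℝ → ℝ) : ℝ → ℝ := fun u => ω |u| / |u|

lemma integrableOn_Bnd {ω : ℝ → ℝ} (hω : IsConcaveModulus ω) (hd : DiniCondition ω) :
    IntegrableOn (Bnd ω) Sball := by
  obtain ⟨ε, hε, hint⟩ := hd
  set ε' := min ε π with hε'def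
  have hε' : 0 < ε' := lt_min hε Real.pi_pos
  have h1 : IntegrableOn (fun u => ω u / u) (Ioo 0 ε') :=
    hint.mono_set (Ioo_subset_Ioo le_rfl (min_le_left _ _))
  have h2 : IntegrableOn (fun u => ω u / u) (Icc ε' π) := by
    refine ContinuousOn.integrableOn_compact isCompact_Icc ?_
    exact (hω.1.continuousOn.div continuousOn_id
      (fun u hu => ne_of_gt (lt_of_lt_of_le hε' hu.1)))
  have hpos : IntegrableOn (fun u => ω u / u) (Ioc 0 π) := by
    refine (h1.union h2).mono_set ?_
    intro u hu
    rcases lt_or_ge u ε' with h | h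
    · exact Or.inl ⟨hu.1, h⟩
    · exact Or.inr ⟨h, hu.2⟩
  have hposB : IntegrableOn (Bnd ω) (Ioc 0 π) := by
    refine hpos.congr_fun (fun u hu => ?_) measurableSet_Ioc
    simp [Bnd, abs_of_pos hu.1]
  have hnegB : IntegrableOn (Bnd ω) (Ico (-π) 0) := by
    have hi : Integrable ((Ioc 0 π).indicator (Bnd ω)) :=
      (integrable_indicator_iff measurableSet_Ioc).2 hposB
    have hni := hi.comp_neg
    have heq : (fun u : ℝ => (Ioc 0 π).indicator (Bnd ω) (-u))
        = (Ico (-π) 0).indicator (Bnd ω) := by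
      funext u
      by_cases hu : u ∈ Ico (-π) 0
      · rw [Set.indicator_of_mem hu]
        rw [Set.indicator_of_mem (by constructor <;> [linarith [hu.2]; linarith [hu.1]] :
          -u ∈ Ioc 0 π)]
        simp [Bnd, abs_neg]
      · rw [Set.indicator_of_notMem hu]
        rw [Set.indicator_of_notMem ?_]
        intro hmem
        exact hu ⟨by linarith [hmem.2], by linarith [hmem.1]⟩
    rw [heq] at hni
    exact (integrable_indicator_iff measurableSet_Ico).1 hni
  refine (hnegB.union hposB).mono_set ?_
  rintro u ⟨hu0, huπ⟩
  rcases lt_trichotomy u 0 with h | h | h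
  · left
    refine ⟨?_, h⟩
    rw [abs_of_neg h] at huπ; linarith
  · exfalso; simp [h] at hu0
  · right; exact ⟨h, by rwa [abs_of_pos h] at huπ⟩

lemma integrableOn_mod {ω : ℝ → ℝ} (hω : IsConcaveModulus ω) (hd : DiniCondition ω)
    {φ : ℝ → ℝ} (hφ : Continuous φ) (hmod : ∀ a b : ℝ, |φ a - φ b| ≤ ω |a - b|) (x : ℝ) :
    IntegrableOn (fun u => (φ (x + u) - φ x) * Kk u) Sball := by
  refine Integrable.mono' (integrableOn_Bnd hω hd)
    ((((hφ.comp (continuous_const.add continuous_id)).sub continuous_const).measurable.mul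
      Kk_measurable).aestronglyMeasurable.restrict) ?_
  filter_upwards [ae_restrict_mem Sball_meas] with u hu
  rw [Real.norm_eq_abs, abs_mul]
  have h1 : |φ (x + u) - φ x| ≤ ω |u| := by
    have := hmod (x + u) x
    simpa using this
  have h2 : |Kk u| ≤ 1 / |u| := Kk_abs_le hu.1 hu.2
  have h3 : 0 ≤ ω |u| := hω.2.2.2.2.1 |u| (abs_nonneg u)
  calc |φ (x + u) - φ x| * |Kk u| ≤ ω |u| * (1 / |u|) :=
        mul_le_mul h1 h2 (abs_nonneg _) h3
    _ = Bnd ω u := by rw [mul_one_div]; rfl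

lemma integrableOn_lip {φ : ℝ → ℝ} (hφ : Continuous φ) {M : ℝ}
    (hlip : ∀ a b : ℝ, |φ a - φ b| ≤ M * |a - b|) (x : ℝ) :
    IntegrableOn (fun u => (φ (x + u) - φ x) * Kk u) Sball := by
  have hc : IntegrableOn (fun _ : ℝ => M) Sball volume :=
    integrableOn_const Sball_vol.ne
  refine Integrable.mono' hc
    ((((hφ.comp (continuous_const.add continuous_id)).sub continuous_const).measurable.mul
      Kk_measurable).aestronglyMeasurable.restrict) ?_
  filter_upwards [ae_restrict_mem Sball_meas] with u hu
  rw [Real.norm_eq_abs, abs_mul]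
  have h1 : |φ (x + u) - φ x| ≤ M * |u| := by
    have := hlip (x + u) x
    simpa using this
  have h2 : |Kk u| ≤ 1 / |u| := Kk_abs_le hu.1 hu.2
  have hM : 0 ≤ M := by
    have := hlip (x + 1) x
    have h0 : 0 ≤ |φ (x + 1) - φ x| := abs_nonneg _
    simpa using le_trans h0 this
  calc |φ (x + u) - φ x| * |Kk u| ≤ (M * |u|) * (1 / |u|) :=
        mul_le_mul h1 h2 (abs_nonneg _) (by positivity)
    _ = M := by
        rw [mul_one_div, mul_div_assoc, div_self (ne_of_gt hu.1), mul_one]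

lemma norm_G'_le {ω φ : ℝ → ℝ} (hω : IsConcaveModulus ω)
    (hmod : ∀ a b : ℝ, |φ a - φ b| ≤ ω |a - b|) {u : ℝ} (hu : u ∈ Sball) (y : ℝ) :
    ‖(φ (y + u) - φ y) * Kk u‖ ≤ Bnd ω u := by
  rw [Real.norm_eq_abs, abs_mul]
  have h1 : |φ (y + u) - φ y| ≤ ω |u| := by
    have := hmod (y + u) y
    simpa using this
  have h2 : |Kk u| ≤ 1 / |u| := Kk_abs_le hu.1 hu.2
  have h3 : 0 ≤ ω |u| := hω.2.2.2.2.1 |u| (abs_nonneg u)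
  calc |φ (y + u) - φ y| * |Kk u| ≤ ω |u| * (1 / |u|) :=
        mul_le_mul h1 h2 (abs_nonneg _) h3
    _ = Bnd ω u := by rw [mul_one_div]; rfl

/-- conjugation commutes with differentiation. -/
theorem conj_deriv_comm (ω f : ℝ → ℝ) (hω : IsConcaveModulus ω) (hd : DiniCondition ω)
    (hp : Function.Periodic f (2 * π)) (hf : ContDiff ℝ 1 f)
    (hmod : ∀ x y : ℝ, |deriv f x - deriv f y| ≤ ω |x - y|) :
    ∃ g h : ℝ → ℝ, ConjFn f g ∧ ConjFn (deriv f) h ∧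
      (∀ x : ℝ, HasDerivAt g (h x) x) ∧ Continuous h := by
  have hdf : Differentiable ℝ f := hf.differentiable one_ne_zero
  have hf'c : Continuous (deriv f) := hf.continuous_deriv le_rfl
  have hp' : Function.Periodic (deriv f) (2 * π) := by
    intro y
    have h1 : (fun x => f (x + 2 * π)) = f := funext fun x => hp x
    calc deriv f (y + 2 * π) = deriv (fun x => f (x + 2 * π)) y :=
          (deriv_comp_add_const f (2 * π) y).symm
      _ = deriv f y := by rw [h1]
  obtain ⟨C, hC⟩ : ∃ C, ∀ y ∈ Icc (0:ℝ) (2 * π), ‖deriv f y‖ ≤ C :=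
    IsCompact.exists_bound_of_continuousOn isCompact_Icc hf'c.continuousOn
  have hbd : ∀ y, |deriv f y| ≤ max C 0 := by
    intro y
    obtain ⟨z, hz, hyz⟩ := hp'.exists_mem_Ico₀ Real.two_pi_pos y
    rw [hyz]
    calc |deriv f z| ≤ C := by
          simpa [Real.norm_eq_abs] using hC z ⟨hz.1, le_of_lt hz.2⟩
      _ ≤ max C 0 := le_max_left _ _
  have hlipf : ∀ a b : ℝ, |f a - f b| ≤ max C 0 * |a - b| := by
    set Cn : NNReal := ⟨max C 0, le_max_right _ _⟩ with hCn
    have hL : LipschitzWith Cn f := by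
      refine lipschitzWith_of_nnnorm_deriv_le hdf (fun y => ?_)
      rw [← NNReal.coe_le_coe]
      exact hbd y
    intro a b
    have := hL.dist_le_mul a b
    rw [Real.dist_eq, Real.dist_eq] at this
    exact this
  have hGint : ∀ x : ℝ, IntegrableOn (fun u => (f (x + u) - f x) * Kk u) Sball :=
    fun x => integrableOn_lip hf.continuous hlipf x
  have hG'int : ∀ x : ℝ, IntegrableOn (fun u => (deriv f (x + u) - deriv f x) * Kk u) Sball :=
    fun x => integrableOn_mod hω hd hf'c hmod x
  have hGmeas : ∀ y : ℝ, AEStronglyMeasurable (fun u => (f (y + u) - f y) * Kk u)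
      (volume.restrict Sball) := fun y =>
    (((hf.continuous.comp (continuous_const.add continuous_id)).sub
      continuous_const).measurable.mul Kk_measurable).aestronglyMeasurable.restrict
  have hG'meas : ∀ y : ℝ, AEStronglyMeasurable (fun u => (deriv f (y + u) - deriv f y) * Kk u)
      (volume.restrict Sball) := fun y =>
    (((hf'c.comp (continuous_const.add continuous_id)).sub
      continuous_const).measurable.mul Kk_measurable).aestronglyMeasurable.restrict
  refine ⟨fun x => -(1 / π) * ∫ u in Sball, (f (x + u) - f x) * Kk u,
    fun x => -(1 / π) * ∫ u in Sball, (deriv f (x + u) - deriv f x) * Kk u,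
    fun x => conjAt_of f x (hGint x), fun x => conjAt_of (deriv f) x (hG'int x), ?_, ?_⟩
  · intro x
    have main := hasDerivAt_integral_of_dominated_loc_of_deriv_le
      (μ := volume.restrict Sball) (x₀ := x)
      (F := fun y u => (f (y + u) - f y) * Kk u)
      (F' := fun y u => (deriv f (y + u) - deriv f y) * Kk u)
      (bound := Bnd ω) (Metric.ball_mem_nhds x one_pos)
      (Eventually.of_forall hGmeas) (hGint x) (hG'meas x)
      ?_ (integrableOn_Bnd hω hd) ?_
    · exact main.2.const_mul (-(1 / π))
    · filter_upwards [ae_restrict_mem Sball_meas] with u hu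
      intro y _
      exact norm_G'_le hω hmod hu y
    · refine Eventually.of_forall fun u => fun y _ => ?_
      have h1 : HasDerivAt (fun y => f (y + u)) (deriv f (y + u)) y := by
        have := ((hdf (y + u)).hasDerivAt.comp y ((hasDerivAt_id y).add_const u))
        simpa [Function.comp_def] using this
      exact (h1.sub (hdf y).hasDerivAt).mul_const (Kk u)
  · refine continuous_iff_continuousAt.2 fun x => ?_
    have main : Tendsto (fun y => ∫ u in Sball, (deriv f (y + u) - deriv f y) * Kk u) (nhds x)
        (nhds (∫ u in Sball, (deriv f (x + u) - deriv f x) * Kk u)) := by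
      refine tendsto_integral_filter_of_dominated_convergence (Bnd ω)
        (Eventually.of_forall hG'meas) ?_ (integrableOn_Bnd hω hd) ?_
      · refine Eventually.of_forall fun y => ?_
        filter_upwards [ae_restrict_mem Sball_meas] with u hu
        exact norm_G'_le hω hmod hu y
      · refine Eventually.of_forall fun u => ?_
        exact Continuous.tendsto (((hf'c.comp (continuous_id.add continuous_const)).sub
          hf'c).mul continuous_const) x
    exact main.const_mul _
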